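/- Let π = fμ/Z and φ_l = exp(l̄(x_r))μ(x)/Z_l with l̄(x_r) = ∫log f(x_r,x_⊥)μ(x_⊥|x_r)dx_⊥. Under a κ-Poincaré inequality for the conditionals μ(x_⊥|x_r), D_KL(π, φ_l) ≤ (√κ·‖f‖_{2,μ}/Z)·sqrt(R(X_r,H_0)), where ‖f‖_{2,μ} = (∫f²μ)^{1/2} and R(X_r,H_0) = tr(P_⊥ H_0 P_⊥) with H_0 = ∫∇log f ∇log f^T μ dx. -/

import Mathlib

open MeasureTheory

/-- Squared Euclidean norm of the (full) gradient of `h : ℝ^n × ℝ^m → ℝ`. -/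
noncomputable def gradSq {n m : ℕ} (h : (Fin n → ℝ) × (Fin m → ℝ) → ℝ)
    (x : (Fin n → ℝ) × (Fin m → ℝ)) : ℝ :=
  (∑ i, (fderiv ℝ h x (Pi.single i 1, 0)) ^ 2) +
    ∑ j, (fderiv ℝ h x (0, Pi.single j 1)) ^ 2

/-- Squared Euclidean norm of the gradient of `h` in the complement directions. -/
noncomputable def gradSqPerp {n m : ℕ} (h : (Fin n → ℝ) × (Fin m → ℝ) → ℝ)
    (x : (Fin n → ℝ) × (Fin m → ℝ)) : ℝ :=
  ∑ j, (fderiv ℝ h x (0, Pi.single j 1)) ^ 2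


open Filter Topology


noncomputable def myψ : ContDiffBump (0:ℝ) := ⟨1, 2, one_pos, one_lt_two⟩
noncomputable def myχ (t : ℝ) : ℝ := t * myψ t

lemma myχ_smooth : ContDiff ℝ 1 myχ := by
  have h := myψ.contDiff (n := 1)
  exact contDiff_id.mul (by exact_mod_cast h)

lemma myχ_abs_le_abs (t : ℝ) : |myχ t| ≤ |t| := by
  rw [myχ, abs_mul]
  calc |t| * |myψ t| ≤ |t| * 1 := by
        apply mul_le_mul_of_nonneg_left _ (abs_nonneg t)
        rw [abs_of_nonneg myψ.nonneg]; exact myψ.le_one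
    _ = |t| := mul_one _

lemma myχ_abs_le_two (t : ℝ) : |myχ t| ≤ 2 := by
  rcases le_or_gt (|t|) 2 with h | h
  · exact (myχ_abs_le_abs t).trans h
  · have : myψ t = 0 := myψ.zero_of_le_dist (by simpa [myψ, Real.dist_eq] using h.le)
    simp [myχ, this]

lemma myχ_eq {t : ℝ} (h : |t| ≤ 1) : myχ t = t := by
  have : myψ t = 1 := myψ.one_of_mem_closedBall (by simpa [myψ, Real.dist_eq] using h)
  simp [myχ, this]

lemma myχ_le_max (t : ℝ) : myχ t ≤ max t 0 := by
  rcases le_or_gt t 0 with h | h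
  · exact le_max_of_le_right (mul_nonpos_of_nonpos_of_nonneg h myψ.nonneg)
  · refine le_max_of_le_left ?_
    calc t * myψ t ≤ t * 1 := mul_le_mul_of_nonneg_left myψ.le_one h.le
      _ = t := mul_one t

lemma myχ_ge_min (t : ℝ) : min t 0 ≤ myχ t := by
  rcases le_or_gt t 0 with h | h
  · refine le_trans (min_le_left _ _) ?_
    calc t = t * 1 := (mul_one t).symm
      _ ≤ t * myψ t := by nlinarith [myψ.nonneg (x := t), myψ.le_one (x := t)]
  · exact le_trans (min_le_right _ _) (mul_nonneg h.le myψ.nonneg)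

lemma myχ_hasDerivAt (t : ℝ) : HasDerivAt myχ (deriv myχ t) t := by
  have : DifferentiableAt ℝ myχ t := (myχ_smooth.differentiable one_ne_zero).differentiableAt
  exact this.hasDerivAt

lemma myχ_deriv_bound : ∃ C : ℝ, 0 ≤ C ∧ ∀ t, |deriv myχ t| ≤ C := by
  have hsupp : HasCompactSupport myχ := by
    have h := myψ.hasCompactSupport
    exact h.mul_left
  have hderiv : HasCompactSupport (deriv myχ) := hsupp.deriv
  have hcont : Continuous (deriv myχ) := by
    have := (myψ.contDiff (n := 2) : ContDiff ℝ (2:ℕ∞) myψ)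
    have hχ2 : ContDiff ℝ 2 myχ := contDiff_id.mul (by exact_mod_cast this)
    exact (hχ2.iterate_deriv' 1 1).continuous
  obtain ⟨C, hC⟩ := hcont.bounded_above_of_compact_support hderiv
  refine ⟨max C 0, le_max_right _ _, fun t => ?_⟩
  have h := hC t
  rw [Real.norm_eq_abs] at h
  exact h.trans (le_max_left _ _)


section gradcomp
variable {n m : ℕ}

lemma fderiv_fix (f : (Fin n → ℝ) × (Fin m → ℝ) → ℝ) (φ : ℝ → ℝ)
    (hφ : Differentiable ℝ φ) (hf : ContDiff ℝ 1 f) (hf0 : ∀ x, f x ≠ 0)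
    (xr : Fin n → ℝ) (y : Fin m → ℝ) :
    (∀ v : Fin n → ℝ,
      fderiv ℝ (fun z : (Fin n → ℝ) × (Fin m → ℝ) => φ (Real.log (f (xr, z.2)))) (xr, y) (v, 0) = 0) ∧
    (∀ w : Fin m → ℝ,
      fderiv ℝ (fun z : (Fin n → ℝ) × (Fin m → ℝ) => φ (Real.log (f (xr, z.2)))) (xr, y) (0, w)
      = deriv φ (Real.log (f (xr, y))) *
        fderiv ℝ (fun z => Real.log (f z)) (xr, y) (0, w)) := by
  have hL : ContDiff ℝ 1 fun z : (Fin n → ℝ) × (Fin m → ℝ) => Real.log (f z) := hf.log hf0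
  set Pσ : ((Fin n → ℝ) × (Fin m → ℝ)) →L[ℝ] ((Fin n → ℝ) × (Fin m → ℝ)) :=
    (0 : ((Fin n → ℝ) × (Fin m → ℝ)) →L[ℝ] (Fin n → ℝ)).prod (ContinuousLinearMap.snd ℝ (Fin n → ℝ) (Fin m → ℝ)) with hPσ
  have hσ : HasFDerivAt (fun z : (Fin n → ℝ) × (Fin m → ℝ) => ((xr, z.2) : (Fin n → ℝ) × (Fin m → ℝ))) Pσ (xr, y) := by
    exact HasFDerivAt.prodMk (hasFDerivAt_const xr ((xr, y) : (Fin n → ℝ) × (Fin m → ℝ)))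
      (ContinuousLinearMap.snd ℝ (Fin n → ℝ) (Fin m → ℝ)).hasFDerivAt
  have hLd : HasFDerivAt (fun z : (Fin n → ℝ) × (Fin m → ℝ) => Real.log (f z))
      (fderiv ℝ (fun z => Real.log (f z)) (xr, y)) (xr, y) :=
    ((hL.differentiable one_ne_zero) (xr, y)).hasFDerivAt
  have hcomp : HasFDerivAt (fun z : (Fin n → ℝ) × (Fin m → ℝ) => Real.log (f (xr, z.2)))
      ((fderiv ℝ (fun z => Real.log (f z)) (xr, y)).comp Pσ) (xr, y) :=
    by have h := hLd.comp (xr, y) hσ; exact h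
  have hφd : HasDerivAt φ (deriv φ (Real.log (f (xr, y)))) (Real.log (f (xr, y))) :=
    (hφ _).hasDerivAt
  have hall : HasFDerivAt (fun z : (Fin n → ℝ) × (Fin m → ℝ) => φ (Real.log (f (xr, z.2))))
      (deriv φ (Real.log (f (xr, y))) •
        ((fderiv ℝ (fun z => Real.log (f z)) (xr, y)).comp Pσ)) (xr, y) :=
    hφd.comp_hasFDerivAt (xr, y) hcomp
  rw [hall.fderiv]
  constructor
  · intro v
    simp [hPσ, Prod.mk_zero_zero]
  · intro w
    simp [hPσ]

lemma gradSq_fix (f : (Fin n → ℝ) × (Fin m → ℝ) → ℝ) (φ : ℝ → ℝ)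
    (hφ : Differentiable ℝ φ) (hf : ContDiff ℝ 1 f) (hf0 : ∀ x, f x ≠ 0)
    (xr : Fin n → ℝ) (y : Fin m → ℝ) :
    gradSq (fun z : (Fin n → ℝ) × (Fin m → ℝ) => φ (Real.log (f (xr, z.2)))) (xr, y)
      = (deriv φ (Real.log (f (xr, y))))^2 *
        gradSqPerp (fun z => Real.log (f z)) (xr, y) := by
  obtain ⟨h1, h2⟩ := fderiv_fix f φ hφ hf hf0 xr y
  simp only [gradSq, gradSqPerp, h1, h2]
  simp [Finset.mul_sum, mul_pow]

end gradcomp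


set_option maxHeartbeats 1000000 in
lemma slice_main {n m : ℕ} (μ f : (Fin n → ℝ) × (Fin m → ℝ) → ℝ)
    (hμ0 : ∀ x, 0 ≤ μ x) (hf0 : ∀ x, 0 < f x) (hfsmooth : ContDiff ℝ 1 f)
    (κ : ℝ) (hκ : 0 ≤ κ) (xr : Fin n → ℝ)
    (W : ℝ) (hW : W = ∫ y, μ (xr, y)) (hW0 : 0 < W)
    (hPoin : ∀ h : (Fin n → ℝ) × (Fin m → ℝ) → ℝ, ContDiff ℝ 1 h →
      (∫ y, (h (xr, y)) ^ 2 * (μ (xr, y) / W)) -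
          (∫ y, h (xr, y) * (μ (xr, y) / W)) ^ 2 ≤
        κ * ∫ y, gradSq h (xr, y) * (μ (xr, y) / W))
    (hfs : Integrable (fun y => f (xr,y) * μ (xr,y)))
    (hGs : Integrable (fun y => gradSqPerp (fun z => Real.log (f z)) (xr,y) * μ (xr,y))) :
    Integrable (fun y => (Real.log (f (xr,y)))^2 * μ (xr,y)) ∧
    Integrable (fun y => Real.log (f (xr,y)) * μ (xr,y)) ∧
    (∫ y, (Real.log (f (xr,y)) - (∫ y', Real.log (f (xr,y')) * (μ (xr,y') / W)))^2 * μ (xr,y))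
        ≤ κ * ∫ y, gradSqPerp (fun z => Real.log (f z)) (xr,y) * μ (xr,y) ∧
    Real.exp (∫ y', Real.log (f (xr,y')) * (μ (xr,y') / W)) * W
        ≤ ∫ y, f (xr,y) * μ (xr,y) := by
  have hf0' : ∀ x, f x ≠ 0 := fun x => (hf0 x).ne'
  have hLsm : ContDiff ℝ 1 (fun z : (Fin n → ℝ) × (Fin m → ℝ) => Real.log (f z)) :=
    hfsmooth.log hf0'
  have hLc : Continuous (fun z : (Fin n → ℝ) × (Fin m → ℝ) => Real.log (f z)) :=
    hLsm.continuous
  set L : (Fin m → ℝ) → ℝ := fun y => Real.log (f (xr, y)) with hLdef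
  have hyc : Continuous (fun y : Fin m → ℝ => ((xr, y) : (Fin n → ℝ) × (Fin m → ℝ))) :=
    Continuous.prodMk_right xr
  have hLyc : Continuous L := hLc.comp hyc
  set G : (Fin m → ℝ) → ℝ := fun y => gradSqPerp (fun z => Real.log (f z)) (xr, y) with hGdef
  have hGc : Continuous G := by
    have hfd : Continuous (fderiv ℝ (fun z : (Fin n → ℝ) × (Fin m → ℝ) => Real.log (f z))) :=
      hLsm.continuous_fderiv one_ne_zero
    have : ∀ j : Fin m, Continuous (fun y : Fin m → ℝ =>
        (fderiv ℝ (fun z => Real.log (f z)) (xr, y)) ((0 : Fin n → ℝ), Pi.single j 1)) := by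
      intro j
      exact (hfd.comp hyc).clm_apply continuous_const
    exact continuous_finset_sum _ fun j _ => ((this j).pow 2)
  have hG0 : ∀ y, 0 ≤ G y := fun y => Finset.sum_nonneg fun j _ => sq_nonneg _
  have hμy0 : ∀ y, 0 ≤ μ (xr, y) := fun y => hμ0 _
  have hμs : Integrable (fun y => μ (xr, y)) := by
    by_contra h
    rw [integral_undef h] at hW
    exact absurd hW hW0.ne'
  have hconv : ∀ g : (Fin m → ℝ) → ℝ,
      (∫ y, g y * (μ (xr,y) / W)) = (∫ y, g y * μ (xr,y)) / W := by
    intro g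
    rw [← integral_div]
    congr 1
    funext y
    ring
  have hμsum1 : (∫ y, μ (xr,y) / W) = 1 := by
    rw [integral_div, ← hW, div_self hW0.ne']
  set Γ : ℝ := ∫ y, G y * μ (xr,y) with hΓdef
  have hΓ0 : 0 ≤ Γ := integral_nonneg fun y => mul_nonneg (hG0 y) (hμy0 y)
  obtain ⟨C, hC0, hCb⟩ := myχ_deriv_bound
  set V : ℝ := κ * C^2 * Γ / W with hVdef
  have hV0 : 0 ≤ V := by positivity
  -- bounded continuous times μ is integrable
  have hbint : ∀ (g : (Fin m → ℝ) → ℝ) (c : ℝ), Continuous g → (∀ y, |g y| ≤ c) →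
      Integrable (fun y => g y * μ (xr,y)) := by
    intro g c hgc hgb
    refine Integrable.mono' (hμs.const_mul c)
      (hgc.aestronglyMeasurable.mul hμs.aestronglyMeasurable) ?_
    refine Filter.Eventually.of_forall fun y => ?_
    rw [Real.norm_eq_abs, abs_mul, abs_of_nonneg (hμy0 y)]
    exact mul_le_mul_of_nonneg_right (hgb y) (hμy0 y)
  -- the truncations
  set hh : ℕ → (Fin n → ℝ) × (Fin m → ℝ) → ℝ :=
    fun M z => ((M:ℝ)+1) * myχ (Real.log (f (xr, z.2)) / ((M:ℝ)+1)) with hhdef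
  have hM1pos : ∀ M : ℕ, (0:ℝ) < (M:ℝ)+1 := fun M => by positivity
  have hhsmooth : ∀ M, ContDiff ℝ 1 (hh M) := by
    intro M
    exact contDiff_const.mul (myχ_smooth.comp
      ((hLsm.comp (contDiff_const.prodMk contDiff_snd)).div_const _))
  have hhcont : ∀ M, Continuous (fun y => hh M (xr, y)) := fun M =>
    ((hhsmooth M).continuous).comp hyc
  have hhabsL : ∀ M y, |hh M (xr,y)| ≤ |L y| := by
    intro M y
    rw [hhdef]
    simp only [abs_mul, abs_of_pos (hM1pos M)]
    calc ((M:ℝ)+1) * |myχ (L y / ((M:ℝ)+1))| ≤ ((M:ℝ)+1) * |L y / ((M:ℝ)+1)| :=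
          mul_le_mul_of_nonneg_left (myχ_abs_le_abs _) (hM1pos M).le
      _ = |L y| := by
          rw [abs_div, abs_of_pos (hM1pos M)]
          field_simp
  have hhabs2 : ∀ M y, |hh M (xr,y)| ≤ 2*((M:ℝ)+1) := by
    intro M y
    rw [hhdef]
    simp only [abs_mul, abs_of_pos (hM1pos M)]
    calc ((M:ℝ)+1) * |myχ (L y / ((M:ℝ)+1))| ≤ ((M:ℝ)+1) * 2 :=
          mul_le_mul_of_nonneg_left (myχ_abs_le_two _) (hM1pos M).le
      _ = 2*((M:ℝ)+1) := by ring
  have hhub : ∀ M y, hh M (xr,y) ≤ f (xr,y) := by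
    intro M y
    have h1 : myχ (L y / ((M:ℝ)+1)) ≤ max (L y / ((M:ℝ)+1)) 0 := myχ_le_max _
    have h2 : hh M (xr,y) ≤ max (L y) 0 := by
      rw [hhdef]
      simp only
      calc ((M:ℝ)+1) * myχ (L y / ((M:ℝ)+1)) ≤ ((M:ℝ)+1) * max (L y / ((M:ℝ)+1)) 0 :=
            mul_le_mul_of_nonneg_left h1 (hM1pos M).le
        _ = max (L y) 0 := by
            rw [mul_max_of_nonneg _ _ (hM1pos M).le, mul_zero, mul_div_cancel₀ _ (hM1pos M).ne']
    refine h2.trans ?_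
    have := Real.log_le_sub_one_of_pos (hf0 (xr,y))
    have := hf0 (xr,y)
    simp only [max_le_iff]
    constructor <;> [skip; linarith]
    rw [hLdef]
    simp only
    linarith
  have hhlb : ∀ M y (a:ℝ), 0 ≤ a → -a ≤ L y → -a ≤ hh M (xr,y) := by
    intro M y a ha haL
    have h1 : min (L y / ((M:ℝ)+1)) 0 ≤ myχ (L y / ((M:ℝ)+1)) := myχ_ge_min _
    have h2 : min (L y) 0 ≤ hh M (xr,y) := by
      rw [hhdef]
      simp only
      calc min (L y) 0 = ((M:ℝ)+1) * min (L y / ((M:ℝ)+1)) 0 := by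
            rw [mul_min_of_nonneg _ _ (hM1pos M).le, mul_zero, mul_div_cancel₀ _ (hM1pos M).ne']
        _ ≤ ((M:ℝ)+1) * myχ (L y / ((M:ℝ)+1)) := mul_le_mul_of_nonneg_left h1 (hM1pos M).le
    refine le_trans ?_ h2
    simp only [le_min_iff]
    exact ⟨haL, by linarith⟩
  have hheq : ∀ y, ∀ᶠ M : ℕ in atTop, hh M (xr,y) = L y := by
    intro y
    filter_upwards [eventually_ge_atTop (Nat.ceil (|L y|))] with M hM
    have h1 : |L y / ((M:ℝ)+1)| ≤ 1 := by
      rw [abs_div, abs_of_pos (hM1pos M), div_le_one (hM1pos M)]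
      calc |L y| ≤ (Nat.ceil (|L y|) : ℝ) := Nat.le_ceil _
        _ ≤ (M:ℝ) := by exact_mod_cast hM
        _ ≤ (M:ℝ)+1 := by linarith
    rw [hhdef]
    simp only
    rw [myχ_eq h1, mul_div_cancel₀ _ (hM1pos M).ne']
  -- gradient bound for the truncations
  have hhgrad : ∀ M y, gradSq (hh M) (xr,y) ≤ C^2 * G y := by
    intro M y
    have hφd : Differentiable ℝ (fun t => ((M:ℝ)+1) * myχ (t / ((M:ℝ)+1))) :=
      (((myχ_smooth.differentiable one_ne_zero).comp (differentiable_id.div_const _)).const_mul _)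
    have hder : ∀ s : ℝ, deriv (fun t => ((M:ℝ)+1) * myχ (t / ((M:ℝ)+1))) s
        = deriv myχ (s / ((M:ℝ)+1)) := by
      intro s
      have h1 : HasDerivAt (fun t : ℝ => t / ((M:ℝ)+1)) (1 / ((M:ℝ)+1)) s := by
        simpa using (hasDerivAt_id s).div_const ((M:ℝ)+1)
      have h2 : HasDerivAt (fun t => myχ (t / ((M:ℝ)+1)))
          (deriv myχ (s / ((M:ℝ)+1)) * (1 / ((M:ℝ)+1))) s :=
        (myχ_hasDerivAt _).comp s h1
      have h3 : HasDerivAt (fun t => ((M:ℝ)+1) * myχ (t / ((M:ℝ)+1)))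
          (((M:ℝ)+1) * (deriv myχ (s / ((M:ℝ)+1)) * (1 / ((M:ℝ)+1)))) s := h2.const_mul _
      rw [h3.deriv]
      field_simp
  -- identify gradSq with the formula
    have hgs := gradSq_fix f (fun t => ((M:ℝ)+1) * myχ (t / ((M:ℝ)+1))) hφd hfsmooth hf0' xr y
    have : gradSq (hh M) (xr,y)
        = (deriv (fun t => ((M:ℝ)+1) * myχ (t / ((M:ℝ)+1))) (L y))^2 * G y := hgs
    rw [this, hder]
    have hd2 : (deriv myχ (L y / ((M:ℝ)+1)))^2 ≤ C^2 := by
      have := hCb (L y / ((M:ℝ)+1))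
      nlinarith [abs_nonneg (deriv myχ (L y / ((M:ℝ)+1))), sq_abs (deriv myχ (L y / ((M:ℝ)+1)))]
    exact mul_le_mul_of_nonneg_right hd2 (hG0 y)
  -- integrability of truncation integrands
  have htint : ∀ M, Integrable (fun y => hh M (xr,y) * μ (xr,y)) := fun M =>
    hbint _ (2*((M:ℝ)+1)) (hhcont M) (hhabs2 M)
  have hSint : ∀ M, Integrable (fun y => (hh M (xr,y))^2 * μ (xr,y)) := by
    intro M
    refine hbint _ ((2*((M:ℝ)+1))^2) ((hhcont M).pow 2) fun y => ?_
    rw [abs_pow]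
    exact pow_le_pow_left₀ (abs_nonneg _) (hhabs2 M y) 2
  set t : ℕ → ℝ := fun M => ∫ y, hh M (xr,y) * μ (xr,y) with htdef
  set S : ℕ → ℝ := fun M => ∫ y, (hh M (xr,y))^2 * μ (xr,y) with hSdef
  -- Poincaré for the truncations
  have hPM : ∀ M, S M / W - (t M / W)^2 ≤ V := by
    intro M
    have h1 := hPoin (hh M) (hhsmooth M)
    rw [hconv, hconv, hconv] at h1
    have h2 : (∫ y, gradSq (hh M) (xr,y) * μ (xr,y)) ≤ C^2 * Γ := by
      have h3 : (∫ y, C^2 * (G y * μ (xr,y))) = C^2 * Γ := by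
        rw [integral_const_mul]
      rw [← h3]
      refine integral_mono_of_nonneg (Filter.Eventually.of_forall fun y => ?_)
        (hGs.const_mul (C^2)) (Filter.Eventually.of_forall fun y => ?_)
      · have : 0 ≤ gradSq (hh M) (xr,y) := by
          rw [gradSq]
          positivity
        exact mul_nonneg this (hμy0 y)
      · dsimp only
        rw [← mul_assoc]
        exact mul_le_mul_of_nonneg_right (hhgrad M y) (hμy0 y)
    refine h1.trans ?_
    have h4 : V = κ * ((C^2*Γ)/W) := by rw [hVdef]; ring
    rw [h4]
    have h5 : (∫ y, gradSq (hh M) (xr,y) * μ (xr,y)) / W ≤ (C^2*Γ)/W :=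
      (div_le_div_iff_of_pos_right hW0).mpr h2
    exact mul_le_mul_of_nonneg_left h5 hκ

  -- choose a level with at least half the mass
  set A : ℕ → Set (Fin m → ℝ) := fun k => {y | -(k:ℝ) < L y} with hAdef
  have hAmeas : ∀ k, MeasurableSet (A k) := fun k =>
    (isOpen_lt continuous_const hLyc).measurableSet
  have hqa : Tendsto (fun k => ∫ y, (A k).indicator (fun y' => μ (xr,y')) y) atTop (𝓝 W) := by
    rw [hW]
    refine integral_tendsto_of_tendsto_of_monotone
      (fun k => hμs.indicator (hAmeas k)) hμs ?_ ?_
    · refine Filter.Eventually.of_forall fun y => ?_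
      intro k l hkl
      dsimp only
      by_cases hy : y ∈ A k
      · have hy' : y ∈ A l := by
          have h1 : -(k:ℝ) < L y := hy
          have h2 : (k:ℝ) ≤ (l:ℝ) := by exact_mod_cast hkl
          show -(l:ℝ) < L y
          linarith
        rw [Set.indicator_of_mem hy, Set.indicator_of_mem hy']
      · rw [Set.indicator_of_notMem hy]
        exact Set.indicator_apply_nonneg (fun _ => hμy0 y)
    · refine Filter.Eventually.of_forall fun y => ?_
      have hev : ∀ᶠ k : ℕ in atTop, (A k).indicator (fun y' => μ (xr,y')) y = μ (xr,y) := by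
        filter_upwards [eventually_gt_atTop (Nat.ceil (|L y|))] with k hk
        refine Set.indicator_of_mem ?_ _
        have h1 : |L y| < (k:ℝ) :=
          lt_of_le_of_lt (Nat.le_ceil _) (by exact_mod_cast hk)
        have h2 := abs_lt.mp h1
        show -(k:ℝ) < L y
        linarith [h2.1]
      exact Tendsto.congr' (hev.mono fun k hk => hk.symm) tendsto_const_nhds
  obtain ⟨a, ha⟩ : ∃ k : ℕ, W/2 ≤ ∫ y, (A k).indicator (fun y' => μ (xr,y')) y := by
    obtain ⟨k, hk⟩ := (hqa.eventually_const_lt (show W/2 < W by linarith)).exists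
    exact ⟨k, hk.le⟩
  set Fs : ℝ := ∫ y, f (xr,y) * μ (xr,y) with hFsdef
  have htub : ∀ M, t M ≤ Fs := fun M =>
    integral_mono (htint M) hfs fun y =>
      mul_le_mul_of_nonneg_right (hhub M y) (hμy0 y)
  have hτlb : ∀ M, -((a:ℝ) + 1 + Real.sqrt (2*V)) ≤ t M / W := by
    intro M
    by_contra hcon
    push_neg at hcon
    set τ := t M / W with hτdef
    have i1 : Integrable (fun y => ((hh M (xr,y))^2 * μ (xr,y)) * W⁻¹) := (hSint M).mul_const _
    have i2 : Integrable (fun y => (2*τ) * ((hh M (xr,y) * μ (xr,y)) * W⁻¹)) :=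
      ((htint M).mul_const _).const_mul _
    have i3 : Integrable (fun y => τ^2 * (μ (xr,y) / W)) := (hμs.div_const _).const_mul _
    have hvar : ∫ y, (hh M (xr,y) - τ)^2 * (μ (xr,y)/W) = S M / W - τ^2 := by
      have e1 : (fun y => (hh M (xr,y) - τ)^2 * (μ (xr,y)/W))
          = fun y => (((hh M (xr,y))^2 * μ (xr,y)) * W⁻¹
              - (2*τ) * ((hh M (xr,y) * μ (xr,y)) * W⁻¹)) + τ^2 * (μ (xr,y) / W) := by
        funext y
        field_simp
        ring
      have i12 : Integrable (fun y => ((hh M (xr,y))^2 * μ (xr,y)) * W⁻¹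
          - (2*τ) * ((hh M (xr,y) * μ (xr,y)) * W⁻¹)) := i1.sub i2
      rw [e1, integral_add i12 i3, integral_sub i1 i2, integral_mul_const,
        integral_const_mul, integral_mul_const, integral_const_mul, hμsum1]
      rw [hτdef]
      field_simp
      ring
    have iR : Integrable (fun y => (hh M (xr,y) - τ)^2 * (μ (xr,y)/W)) := by
      have e5 : (fun y => (hh M (xr,y) - τ)^2 * (μ (xr,y)/W))
          = fun y => ((hh M (xr,y) - τ)^2 * μ (xr,y)) * W⁻¹ := by
        funext y
        ring
      rw [e5]
      refine Integrable.mul_const ?_ _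
      refine hbint _ ((2*((M:ℝ)+1) + |τ|)^2) (((hhcont M).sub continuous_const).pow 2)
        fun y => ?_
      rw [abs_pow]
      refine pow_le_pow_left₀ (abs_nonneg _) ?_ 2
      calc |hh M (xr,y) - τ| ≤ |hh M (xr,y)| + |τ| := by
            rw [sub_eq_add_neg]
            exact (abs_add_le _ _).trans (by rw [abs_neg])
        _ ≤ 2*((M:ℝ)+1) + |τ| := by linarith [hhabs2 M y]
    have iL : Integrable (fun y =>
        (A a).indicator (fun y' => (1 + Real.sqrt (2*V))^2 * (μ (xr,y') / W)) y) :=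
      ((hμs.div_const W).const_mul _).indicator (hAmeas a)
    have e2 : ∀ y, (A a).indicator (fun y' => (1 + Real.sqrt (2*V))^2 * (μ (xr,y') / W)) y
        ≤ (hh M (xr,y) - τ)^2 * (μ (xr,y)/W) := by
      intro y
      by_cases hy : y ∈ A a
      · rw [Set.indicator_of_mem hy]
        have h1 : -(a:ℝ) < L y := hy
        have h2 : -(a:ℝ) ≤ hh M (xr,y) := hhlb M y a (Nat.cast_nonneg a) h1.le
        have h3 : 1 + Real.sqrt (2*V) ≤ hh M (xr,y) - τ := by linarith
        have h5 : (0:ℝ) ≤ 1 + Real.sqrt (2*V) := by positivity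
        have h4 : (1 + Real.sqrt (2*V))^2 ≤ (hh M (xr,y) - τ)^2 := by nlinarith
        exact mul_le_mul_of_nonneg_right h4 (div_nonneg (hμy0 y) hW0.le)
      · rw [Set.indicator_of_notMem hy]
        exact mul_nonneg (sq_nonneg _) (div_nonneg (hμy0 y) hW0.le)
    have hlow := integral_mono iL iR e2
    have e3 : ∫ y, (A a).indicator (fun y' => (1 + Real.sqrt (2*V))^2 * (μ (xr,y') / W)) y
        = (1 + Real.sqrt (2*V))^2 * ((∫ y, (A a).indicator (fun y' => μ (xr,y')) y) / W) := by
      have e4 : (fun y => (A a).indicator (fun y' => (1 + Real.sqrt (2*V))^2 * (μ (xr,y') / W)) y)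
          = fun y => ((1 + Real.sqrt (2*V))^2 * W⁻¹) * (A a).indicator (fun y' => μ (xr,y')) y := by
        funext y
        by_cases hy : y ∈ A a
        · rw [Set.indicator_of_mem hy, Set.indicator_of_mem hy]
          ring
        · rw [Set.indicator_of_notMem hy, Set.indicator_of_notMem hy]
          ring
      rw [e4, integral_const_mul]
      field_simp
    have hPMM : S M / W - τ^2 ≤ V := hPM M
    rw [e3, hvar] at hlow
    have hq2 : (1:ℝ)/2 ≤ (∫ y, (A a).indicator (fun y' => μ (xr,y')) y)/W := by
      rw [le_div_iff₀ hW0]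
      linarith
    have hsq : Real.sqrt (2*V)^2 = 2*V := Real.sq_sqrt (by linarith)
    nlinarith [Real.sqrt_nonneg (2*V), sq_nonneg (1 + Real.sqrt (2*V)),
      mul_le_mul_of_nonneg_left hq2 (sq_nonneg (1 + Real.sqrt (2*V)))]

  -- uniform bound on second moments
  set τb : ℝ := max (Fs/W) ((a:ℝ)+1+Real.sqrt (2*V)) with hτbdef
  have hτabs : ∀ M, |t M / W| ≤ τb := by
    intro M
    rw [abs_le]
    refine ⟨?_, ?_⟩
    · calc -τb ≤ -((a:ℝ)+1+Real.sqrt (2*V)) := neg_le_neg (le_max_right _ _)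
        _ ≤ t M / W := hτlb M
    · calc t M / W ≤ Fs / W := (div_le_div_iff_of_pos_right hW0).mpr (htub M)
        _ ≤ τb := le_max_left _ _
  have hSbd : ∀ M, S M ≤ W * (V + τb^2) := by
    intro M
    have h1 := hPM M
    have h2 : (t M / W)^2 ≤ τb^2 := by
      have h6 := hτabs M
      nlinarith [abs_nonneg (t M / W), sq_abs (t M / W)]
    have h3 : S M / W ≤ V + τb^2 := by linarith
    calc S M = (S M / W) * W := by field_simp
      _ ≤ (V + τb^2) * W := mul_le_mul_of_nonneg_right h3 hW0.le
      _ = W * (V + τb^2) := mul_comm _ _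
  -- Fatou: square integrability of L
  have hμaem : AEMeasurable (fun y => μ (xr,y)) := hμs.aemeasurable
  have hL2int : Integrable (fun y => (L y)^2 * μ (xr,y)) := by
    refine ⟨((hLyc.pow 2).aestronglyMeasurable.mul hμs.aestronglyMeasurable), ?_⟩
    rw [hasFiniteIntegral_iff_ofReal (Filter.Eventually.of_forall fun y =>
      mul_nonneg (sq_nonneg _) (hμy0 y))]
    have key : ∫⁻ y, ENNReal.ofReal ((L y)^2 * μ (xr,y)) ≤ ENNReal.ofReal (W * (V + τb^2)) := by
      have e6 : ∀ y, ENNReal.ofReal ((L y)^2 * μ (xr,y))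
          = Filter.liminf (fun M : ℕ => ENNReal.ofReal ((hh M (xr,y))^2 * μ (xr,y))) atTop := by
        intro y
        refine (Filter.Tendsto.liminf_eq ?_).symm
        refine Tendsto.congr' ?_ tendsto_const_nhds
        filter_upwards [hheq y] with M hM
        rw [hM]
      have h7 : ∀ M : ℕ, ∫⁻ y, ENNReal.ofReal ((hh M (xr,y))^2 * μ (xr,y))
          ≤ ENNReal.ofReal (W * (V + τb^2)) := by
        intro M
        rw [← ofReal_integral_eq_lintegral_ofReal (hSint M)
          (Filter.Eventually.of_forall fun y => mul_nonneg (sq_nonneg _) (hμy0 y))]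
        exact ENNReal.ofReal_le_ofReal (hSbd M)
      calc ∫⁻ y, ENNReal.ofReal ((L y)^2 * μ (xr,y))
          = ∫⁻ y, Filter.liminf (fun M : ℕ =>
              ENNReal.ofReal ((hh M (xr,y))^2 * μ (xr,y))) atTop := by
            congr 1
            funext y
            exact e6 y
        _ ≤ Filter.liminf (fun M : ℕ =>
              ∫⁻ y, ENNReal.ofReal ((hh M (xr,y))^2 * μ (xr,y))) atTop := by
            refine lintegral_liminf_le' fun M => ?_
            exact ENNReal.measurable_ofReal.comp_aemeasurable
              ((((hhcont M).pow 2).aemeasurable).mul hμaem)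
        _ ≤ Filter.liminf (fun _ : ℕ => ENNReal.ofReal (W * (V + τb^2))) atTop :=
            Filter.liminf_le_liminf (Filter.Eventually.of_forall h7)
        _ = ENNReal.ofReal (W * (V + τb^2)) := Filter.liminf_const _
    exact lt_of_le_of_lt key ENNReal.ofReal_lt_top
  -- integrability of L against μ
  have hL1int : Integrable (fun y => L y * μ (xr,y)) := by
    refine Integrable.mono' ((hμs.add hL2int).const_mul (1/2))
      (hLyc.aestronglyMeasurable.mul hμs.aestronglyMeasurable)
      (Filter.Eventually.of_forall fun y => ?_)
    rw [Real.norm_eq_abs, abs_mul, abs_of_nonneg (hμy0 y)]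
    have h1 : |L y| ≤ (1 + (L y)^2)/2 := by nlinarith [sq_abs (L y), sq_nonneg (|L y| - 1)]
    calc |L y| * μ (xr,y) ≤ ((1 + (L y)^2)/2) * μ (xr,y) :=
          mul_le_mul_of_nonneg_right h1 (hμy0 y)
      _ = 1/2 * (μ (xr,y) + (L y)^2 * μ (xr,y)) := by ring
  -- the conditional mean of L
  set lb : ℝ := ∫ y', L y' * (μ (xr,y') / W) with hlbdef
  have hlbW : lb = (∫ y', L y' * μ (xr,y')) / W := hconv L
  have h4 : ∫ y, L y * μ (xr,y) = lb * W := by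
    rw [hlbW]
    field_simp
  -- Poincaré for L itself
  have hgradL : ∀ y, gradSq (fun z => Real.log (f (xr, z.2))) (xr,y) = G y := by
    intro y
    have h := gradSq_fix f id differentiable_id hfsmooth hf0' xr y
    simpa using h
  have hPoinL := hPoin (fun z => Real.log (f (xr, z.2)))
    (hLsm.comp (contDiff_const.prodMk contDiff_snd))
  beta_reduce at hPoinL
  rw [hconv, hconv, hconv] at hPoinL
  have e8 : (fun y => gradSq (fun z => Real.log (f (xr, z.2))) (xr,y) * μ (xr,y))
      = fun y => G y * μ (xr,y) := by
    funext y
    rw [hgradL y]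
  rw [e8] at hPoinL
  rw [← hlbW] at hPoinL
  -- hPoinL : (∫ L² μ)/W − lb² ≤ κ * (Γ/W)
  have h2 : (∫ y, (L y)^2 * μ (xr,y)) - lb^2 * W ≤ κ * Γ := by
    have h3 := mul_le_mul_of_nonneg_right hPoinL hW0.le
    have e10 : ((∫ y, (L y)^2 * μ (xr,y))/W - lb^2)*W
        = (∫ y, (L y)^2 * μ (xr,y)) - lb^2*W := by field_simp <;> ring
    have e11 : (κ*(Γ/W))*W = κ*Γ := by field_simp
    rw [e10, e11] at h3
    exact h3
  have hvar2 : ∫ y, (L y - lb)^2 * μ (xr,y)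
      = (∫ y, (L y)^2 * μ (xr,y)) - 2*lb*(∫ y, L y * μ (xr,y)) + lb^2 * W := by
    have i1 : Integrable (fun y => (L y)^2 * μ (xr,y)) := hL2int
    have i2 : Integrable (fun y => (2*lb) * (L y * μ (xr,y))) := hL1int.const_mul _
    have i3 : Integrable (fun y => lb^2 * μ (xr,y)) := hμs.const_mul _
    have i12 : Integrable (fun y => (L y)^2 * μ (xr,y) - (2*lb) * (L y * μ (xr,y))) := i1.sub i2
    have e9 : (fun y => (L y - lb)^2 * μ (xr,y))
        = fun y => ((L y)^2 * μ (xr,y) - (2*lb) * (L y * μ (xr,y))) + lb^2 * μ (xr,y) := by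
      funext y
      ring
    rw [e9, integral_add i12 i3, integral_sub i1 i2, integral_const_mul, integral_const_mul, ← hW]
  have goal3 : ∫ y, (L y - lb)^2 * μ (xr,y) ≤ κ * Γ := by
    rw [hvar2, h4]
    nlinarith [h2]
  -- Jensen
  have goal4 : Real.exp lb * W ≤ Fs := by
    have hpt : ∀ y, Real.exp lb * ((1 + (L y - lb)) * μ (xr,y)) ≤ f (xr,y) * μ (xr,y) := by
      intro y
      have h1 : (L y - lb) + 1 ≤ Real.exp (L y - lb) := Real.add_one_le_exp _
      have hexp : Real.exp lb * Real.exp (L y - lb) = f (xr,y) := by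
        rw [← Real.exp_add, show lb + (L y - lb) = L y by ring]
        exact Real.exp_log (hf0 _)
      have h3 : Real.exp lb * (1 + (L y - lb)) ≤ Real.exp lb * Real.exp (L y - lb) :=
        mul_le_mul_of_nonneg_left (by linarith) (Real.exp_pos lb).le
      calc Real.exp lb * ((1 + (L y - lb)) * μ (xr,y))
          = (Real.exp lb * (1 + (L y - lb))) * μ (xr,y) := by ring
        _ ≤ (Real.exp lb * Real.exp (L y - lb)) * μ (xr,y) :=
            mul_le_mul_of_nonneg_right h3 (hμy0 y)
        _ = f (xr,y) * μ (xr,y) := by rw [hexp]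
    have e13 : (fun y => Real.exp lb * ((1 + (L y - lb)) * μ (xr,y)))
        = fun y => (Real.exp lb * (1 - lb)) * μ (xr,y) + Real.exp lb * (L y * μ (xr,y)) := by
      funext y
      ring
    have hint1 : Integrable (fun y => Real.exp lb * ((1 + (L y - lb)) * μ (xr,y))) := by
      rw [e13]
      exact (hμs.const_mul _).add (hL1int.const_mul _)
    have h5 := integral_mono hint1 hfs hpt
    have e12 : ∫ y, Real.exp lb * ((1 + (L y - lb)) * μ (xr,y)) = Real.exp lb * W := by
      rw [e13, integral_add (hμs.const_mul _) (hL1int.const_mul _),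
        integral_const_mul, integral_const_mul, ← hW, h4]
      ring
    rw [e12] at h5
    exact h5
  exact ⟨hL2int, hL1int, goal3, goal4⟩


lemma integral_CS {α : Type*} [MeasurableSpace α] {P : Measure α} (u v w : α → ℝ)
    (hw : ∀ x, 0 ≤ w x)
    (hu : Integrable (fun x => (u x)^2 * w x) P)
    (hv : Integrable (fun x => (v x)^2 * w x) P)
    (huv : Integrable (fun x => u x * v x * w x) P) :
    ∫ x, u x * v x * w x ∂P ≤
      Real.sqrt (∫ x, (u x)^2 * w x ∂P) * Real.sqrt (∫ x, (v x)^2 * w x ∂P) := by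
  set A := ∫ x, (u x)^2 * w x ∂P with hA
  set B := ∫ x, u x * v x * w x ∂P with hB
  set Cc := ∫ x, (v x)^2 * w x ∂P with hC
  have hA0 : 0 ≤ A := integral_nonneg fun x => mul_nonneg (sq_nonneg _) (hw x)
  have hC0 : 0 ≤ Cc := integral_nonneg fun x => mul_nonneg (sq_nonneg _) (hw x)
  have key : ∀ s : ℝ, 0 ≤ A * (s*s) + (2*B) * s + Cc := by
    intro s
    have h1 : 0 ≤ ∫ x, (s * u x + v x)^2 * w x ∂P :=
      integral_nonneg fun x => mul_nonneg (sq_nonneg _) (hw x)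
    have e : (fun x => (s * u x + v x)^2 * w x)
        = fun x => (s*s) * ((u x)^2 * w x) + ((2*s) * (u x * v x * w x) + (v x)^2 * w x) := by
      funext x
      ring
    have i2 : Integrable (fun x => (2*s) * (u x * v x * w x) + (v x)^2 * w x) P :=
      (huv.const_mul _).add hv
    rw [e, integral_add (hu.const_mul _) i2, integral_add (huv.const_mul _) hv,
      integral_const_mul, integral_const_mul] at h1
    linarith
  have hd := discrim_le_zero key
  rw [discrim] at hd
  have hB2 : B^2 ≤ A * Cc := by nlinarith
  calc B ≤ |B| := le_abs_self B
    _ = Real.sqrt (B^2) := (Real.sqrt_sq_eq_abs B).symm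
    _ ≤ Real.sqrt (A * Cc) := Real.sqrt_le_sqrt hB2
    _ = Real.sqrt A * Real.sqrt Cc := Real.sqrt_mul hA0 _


/-- Under a κ-Poincaré inequality for the conditionals, the KL divergence
from the log-likelihood approximation `φ_l = exp(l̄(x_r)) μ / Z_l` satisfies
`D_KL(π, φ_l) ≤ (√κ · ‖f‖_{2,μ} / Z) · sqrt(R(X_r,H_0))`, with
`R(X_r,H_0) = ∫ ‖∇_⊥ log f‖² μ dx`. -/
theorem stmt_15 {n m : ℕ}
    (μ f : (Fin n → ℝ) × (Fin m → ℝ) → ℝ)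
    (hμ0 : ∀ x, 0 ≤ μ x) (hf0 : ∀ x, 0 < f x)
    (hfsmooth : ContDiff ℝ 1 f)
    (hμ1 : ∫ x, μ x = 1)
    (κ : ℝ) (hκ : 0 ≤ κ)
    (Z : ℝ) (hZ : Z = ∫ x, f x * μ x) (hZ0 : 0 < Z)
    (μbar : (Fin n → ℝ) → ℝ)
    (hμbar : ∀ xr, μbar xr = ∫ y, μ (xr, y)) (hμbar0 : ∀ xr, 0 < μbar xr)
    (lbar : (Fin n → ℝ) → ℝ)
    (hlbar : ∀ xr, lbar xr = ∫ y, Real.log (f (xr, y)) * (μ (xr, y) / μbar xr))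
    (Zl : ℝ) (hZl : Zl = ∫ xr, Real.exp (lbar xr) * μbar xr) (hZl0 : 0 < Zl)
    (hPoin : ∀ xr, ∀ h : (Fin n → ℝ) × (Fin m → ℝ) → ℝ, ContDiff ℝ 1 h →
      (∫ y, (h (xr, y)) ^ 2 * (μ (xr, y) / μbar xr)) -
          (∫ y, h (xr, y) * (μ (xr, y) / μbar xr)) ^ 2 ≤
        κ * ∫ y, gradSq h (xr, y) * (μ (xr, y) / μbar xr))
    (hfint : Integrable (fun x => f x * μ x))
    (hf2int : Integrable (fun x => (f x) ^ 2 * μ x))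
    (hKLint : Integrable (fun x => (f x * μ x / Z) *
      Real.log ((f x * μ x / Z) / (Real.exp (lbar x.1) * μ x / Zl))))
    (hRint : Integrable (fun x => gradSqPerp (fun z => Real.log (f z)) x * μ x)) :
    ∫ x, (f x * μ x / Z) *
        Real.log ((f x * μ x / Z) / (Real.exp (lbar x.1) * μ x / Zl)) ≤
      (Real.sqrt κ * Real.sqrt (∫ x, (f x) ^ 2 * μ x) / Z) *
        Real.sqrt (∫ x, gradSqPerp (fun z => Real.log (f z)) x * μ x) := by
  have hf0' : ∀ x, f x ≠ 0 := fun x => (hf0 x).ne'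
  have hLsm : ContDiff ℝ 1 (fun z : (Fin n → ℝ) × (Fin m → ℝ) => Real.log (f z)) :=
    hfsmooth.log hf0'
  have hLc : Continuous (fun z : (Fin n → ℝ) × (Fin m → ℝ) => Real.log (f z)) := hLsm.continuous
  have hprod : (volume : Measure ((Fin n → ℝ) × (Fin m → ℝ)))
      = (volume : Measure (Fin n → ℝ)).prod (volume : Measure (Fin m → ℝ)) :=
    Measure.volume_eq_prod _ _
  have hμint : Integrable μ := by
    by_contra h
    rw [integral_undef h] at hμ1
    norm_num at hμ1
  have hμprod : Integrable μ ((volume : Measure (Fin n → ℝ)).prod volume) := by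
    rwa [← hprod]
  have hfprod : Integrable (fun x => f x * μ x)
      ((volume : Measure (Fin n → ℝ)).prod volume) := by rwa [← hprod]
  have hRprod : Integrable (fun x => gradSqPerp (fun z => Real.log (f z)) x * μ x)
      ((volume : Measure (Fin n → ℝ)).prod volume) := by rwa [← hprod]
  have hμsliceAll : ∀ xr, Integrable (fun y => μ (xr, y)) := by
    intro xr
    by_contra h
    have := hμbar xr
    rw [integral_undef h] at this
    exact absurd this (hμbar0 xr).ne'
  -- a.e. slice integrability and the slice lemma
  have hfs : ∀ᵐ xr : Fin n → ℝ, Integrable (fun y => f (xr,y) * μ (xr,y)) :=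
    hfprod.prod_right_ae
  have hGsl : ∀ᵐ xr : Fin n → ℝ,
      Integrable (fun y => gradSqPerp (fun z => Real.log (f z)) (xr,y) * μ (xr,y)) :=
    hRprod.prod_right_ae
  have hslice : ∀ᵐ xr : Fin n → ℝ,
      (Integrable (fun y => (Real.log (f (xr,y)))^2 * μ (xr,y)) ∧
      Integrable (fun y => Real.log (f (xr,y)) * μ (xr,y)) ∧
      (∫ y, (Real.log (f (xr,y)) -
          (∫ y', Real.log (f (xr,y')) * (μ (xr,y') / μbar xr)))^2 * μ (xr,y))
          ≤ κ * ∫ y, gradSqPerp (fun z => Real.log (f z)) (xr,y) * μ (xr,y) ∧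
      Real.exp (∫ y', Real.log (f (xr,y')) * (μ (xr,y') / μbar xr)) * μbar xr
          ≤ ∫ y, f (xr,y) * μ (xr,y)) := by
    filter_upwards [hfs, hGsl] with xr h1 h2
    exact slice_main μ f hμ0 hf0 hfsmooth κ hκ xr (μbar xr) (hμbar xr) (hμbar0 xr)
      (hPoin xr) h1 h2
  -- Z_l ≤ Z
  have hZlint : Integrable (fun xr => Real.exp (lbar xr) * μbar xr) := by
    by_contra h
    rw [integral_undef h] at hZl
    exact absurd hZl hZl0.ne'
  have hZiter : Z = ∫ xr, ∫ y, f (xr,y) * μ (xr,y) := by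
    rw [hZ, hprod, integral_prod _ hfprod]
  have hZlZ : Zl ≤ Z := by
    rw [hZl, hZiter]
    refine integral_mono_ae hZlint hfprod.integral_prod_left ?_
    filter_upwards [hslice] with xr hx
    rw [hlbar xr]
    exact hx.2.2.2

  -- measurability of lbar
  have hμbarAESM : AEStronglyMeasurable μbar (volume : Measure (Fin n → ℝ)) := by
    have h1 := hμprod.aestronglyMeasurable.integral_prod_right'
    have e : (fun xr => ∫ y, μ (xr,y)) = μbar := funext fun xr => (hμbar xr).symm
    rwa [e] at h1
  have hnumAESM : AEStronglyMeasurable (fun xr => ∫ y, Real.log (f (xr,y)) * μ (xr,y))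
      (volume : Measure (Fin n → ℝ)) :=
    ((hLc.aestronglyMeasurable).mul hμprod.aestronglyMeasurable).integral_prod_right'
  have hlbarAESM : AEStronglyMeasurable lbar (volume : Measure (Fin n → ℝ)) := by
    refine ((hnumAESM.aemeasurable.div hμbarAESM.aemeasurable).aestronglyMeasurable).congr ?_
    refine Filter.Eventually.of_forall fun xr => ?_
    show (∫ y, Real.log (f (xr,y)) * μ (xr,y)) / μbar xr = lbar xr
    rw [hlbar xr, ← integral_div]
    congr 1
    funext y
    rw [div_eq_mul_inv, div_eq_mul_inv, mul_assoc]
  have hlbarFst : AEStronglyMeasurable (fun x : (Fin n → ℝ) × (Fin m → ℝ) => lbar x.1)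
      ((volume : Measure (Fin n → ℝ)).prod volume) :=
    hlbarAESM.comp_quasiMeasurePreserving Measure.quasiMeasurePreserving_fst
  have hvAESM : AEStronglyMeasurable (fun x : (Fin n → ℝ) × (Fin m → ℝ) =>
      Real.log (f x) - lbar x.1) ((volume : Measure (Fin n → ℝ)).prod volume) :=
    hLc.aestronglyMeasurable.sub hlbarFst
  have hqAESM : AEStronglyMeasurable (fun x : (Fin n → ℝ) × (Fin m → ℝ) =>
      (Real.log (f x) - lbar x.1)^2 * μ x) ((volume : Measure (Fin n → ℝ)).prod volume) :=
    ((hvAESM.pow 2).mul hμprod.aestronglyMeasurable)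
  have hq0 : ∀ x : (Fin n → ℝ) × (Fin m → ℝ), 0 ≤ (Real.log (f x) - lbar x.1)^2 * μ x :=
    fun x => mul_nonneg (sq_nonneg _) (hμ0 x)
  set R : ℝ := ∫ x, gradSqPerp (fun z => Real.log (f z)) x * μ x with hRdef
  have hgp0 : ∀ x : (Fin n → ℝ) × (Fin m → ℝ), 0 ≤ gradSqPerp (fun z => Real.log (f z)) x :=
    fun x => Finset.sum_nonneg fun j _ => sq_nonneg _
  have hR0 : 0 ≤ R := integral_nonneg fun x => mul_nonneg (hgp0 x) (hμ0 x)
  have hκR0 : 0 ≤ κ * R := mul_nonneg hκ hR0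
  -- slice-wise lintegral bound
  have hsliceq : ∀ᵐ xr : Fin n → ℝ,
      ∫⁻ y, ENNReal.ofReal ((Real.log (f (xr,y)) - lbar xr)^2 * μ (xr,y))
      ≤ ∫⁻ y, ENNReal.ofReal (κ * (gradSqPerp (fun z => Real.log (f z)) (xr,y) * μ (xr,y))) := by
    filter_upwards [hslice, hGsl] with xr hx hGx
    obtain ⟨hL2, hL1, hvar, _⟩ := hx
    have hsint : Integrable (fun y => (Real.log (f (xr,y)) - lbar xr)^2 * μ (xr,y)) := by
      have e : (fun y => (Real.log (f (xr,y)) - lbar xr)^2 * μ (xr,y))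
          = fun y => ((Real.log (f (xr,y)))^2 * μ (xr,y)
              - (2*lbar xr) * (Real.log (f (xr,y)) * μ (xr,y))) + (lbar xr)^2 * μ (xr,y) := by
        funext y
        ring
      rw [e]
      exact ((hL2.sub (hL1.const_mul _)).add ((hμsliceAll xr).const_mul _))
    rw [← ofReal_integral_eq_lintegral_ofReal hsint
      (Filter.Eventually.of_forall fun y => mul_nonneg (sq_nonneg _) (hμ0 _)),
      ← ofReal_integral_eq_lintegral_ofReal (hGx.const_mul κ)
      (Filter.Eventually.of_forall fun y => mul_nonneg hκ (mul_nonneg (hgp0 _) (hμ0 _)))]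
    apply ENNReal.ofReal_le_ofReal
    rw [integral_const_mul, hlbar xr]
    exact hvar
  -- global bound on the variance-type integral
  have hqprod_lin : ∫⁻ x, ENNReal.ofReal ((Real.log (f x) - lbar x.1)^2 * μ x)
      ∂((volume : Measure (Fin n → ℝ)).prod volume) ≤ ENNReal.ofReal (κ * R) := by
    have hmeas1 : AEMeasurable (fun x : (Fin n → ℝ) × (Fin m → ℝ) =>
        ENNReal.ofReal ((Real.log (f x) - lbar x.1)^2 * μ x))
        ((volume : Measure (Fin n → ℝ)).prod volume) :=
      ENNReal.measurable_ofReal.comp_aemeasurable hqAESM.aemeasurable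
    have hmeas2 : AEMeasurable (fun x : (Fin n → ℝ) × (Fin m → ℝ) =>
        ENNReal.ofReal (κ * (gradSqPerp (fun z => Real.log (f z)) x * μ x)))
        ((volume : Measure (Fin n → ℝ)).prod volume) :=
      ENNReal.measurable_ofReal.comp_aemeasurable
        (hRprod.const_mul κ).aestronglyMeasurable.aemeasurable
    rw [lintegral_prod _ hmeas1]
    calc ∫⁻ xr, ∫⁻ y, ENNReal.ofReal ((Real.log (f (xr,y)) - lbar xr)^2 * μ (xr,y))
        ≤ ∫⁻ xr, ∫⁻ y, ENNReal.ofReal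
            (κ * (gradSqPerp (fun z => Real.log (f z)) (xr,y) * μ (xr,y))) :=
          lintegral_mono_ae hsliceq
      _ = ∫⁻ x, ENNReal.ofReal (κ * (gradSqPerp (fun z => Real.log (f z)) x * μ x))
          ∂((volume : Measure (Fin n → ℝ)).prod volume) := (lintegral_prod _ hmeas2).symm
      _ = ENNReal.ofReal (∫ x, κ * (gradSqPerp (fun z => Real.log (f z)) x * μ x)
          ∂((volume : Measure (Fin n → ℝ)).prod volume)) :=
          (ofReal_integral_eq_lintegral_ofReal (hRprod.const_mul κ)
            (Filter.Eventually.of_forall fun x =>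
              mul_nonneg hκ (mul_nonneg (hgp0 _) (hμ0 _)))).symm
      _ = ENNReal.ofReal (κ * R) := by
          rw [integral_const_mul, hRdef, hprod]
  have hqint : Integrable (fun x => (Real.log (f x) - lbar x.1)^2 * μ x) := by
    rw [hprod]
    refine ⟨hqAESM, ?_⟩
    rw [hasFiniteIntegral_iff_ofReal (Filter.Eventually.of_forall hq0)]
    exact lt_of_le_of_lt hqprod_lin ENNReal.ofReal_lt_top
  have hqbound : ∫ x, (Real.log (f x) - lbar x.1)^2 * μ x ≤ κ * R := by
    have h1 := ofReal_integral_eq_lintegral_ofReal hqint (Filter.Eventually.of_forall hq0)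
    rw [← ENNReal.ofReal_le_ofReal_iff hκR0, h1]
    calc ∫⁻ x, ENNReal.ofReal ((Real.log (f x) - lbar x.1)^2 * μ x)
        = ∫⁻ x, ENNReal.ofReal ((Real.log (f x) - lbar x.1)^2 * μ x)
          ∂((volume : Measure (Fin n → ℝ)).prod volume) := by rw [hprod]
      _ ≤ ENNReal.ofReal (κ * R) := hqprod_lin

  -- pointwise rewriting of the KL integrand
  have hptid : ∀ x : (Fin n → ℝ) × (Fin m → ℝ),
      f x * (Real.log (f x) - lbar x.1) * μ x
      = Z * ((f x * μ x / Z) *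
          Real.log ((f x * μ x / Z) / (Real.exp (lbar x.1) * μ x / Zl)))
        - (Real.log Zl - Real.log Z) * (f x * μ x) := by
    intro x
    rcases eq_or_lt_of_le (hμ0 x) with h0 | hpos
    · rw [← h0]
      simp
    · have hfμ : 0 < f x * μ x := mul_pos (hf0 x) hpos
      rw [Real.log_div (div_pos hfμ hZ0).ne'
        (div_pos (mul_pos (Real.exp_pos _) hpos) hZl0).ne']
      rw [Real.log_div hfμ.ne' hZ0.ne',
        Real.log_div (mul_pos (Real.exp_pos _) hpos).ne' hZl0.ne']
      rw [Real.log_mul (hf0 x).ne' hpos.ne', Real.log_mul (Real.exp_ne_zero _) hpos.ne',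
        Real.log_exp]
      field_simp
      ring
  have hTint : Integrable (fun x => f x * (Real.log (f x) - lbar x.1) * μ x) := by
    have e : (fun x => f x * (Real.log (f x) - lbar x.1) * μ x)
        = fun x => Z * ((f x * μ x / Z) *
            Real.log ((f x * μ x / Z) / (Real.exp (lbar x.1) * μ x / Zl)))
          - (Real.log Zl - Real.log Z) * (f x * μ x) := funext hptid
    rw [e]
    exact (hKLint.const_mul Z).sub (hfint.const_mul _)
  -- Cauchy–Schwarz
  have hCS := integral_CS f (fun x => Real.log (f x) - lbar x.1) μ hμ0 hf2int hqint hTint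
  have hCle : Real.sqrt (∫ x, (Real.log (f x) - lbar x.1)^2 * μ x)
      ≤ Real.sqrt (κ * R) := Real.sqrt_le_sqrt hqbound
  have hT : ∫ x, f x * (Real.log (f x) - lbar x.1) * μ x
      ≤ Real.sqrt (∫ x, (f x)^2 * μ x) * Real.sqrt (κ * R) :=
    hCS.trans (mul_le_mul_of_nonneg_left hCle (Real.sqrt_nonneg _))
  -- decomposition of the KL integral
  have hIeq : ∫ x, (f x * μ x / Z) *
        Real.log ((f x * μ x / Z) / (Real.exp (lbar x.1) * μ x / Zl))
      = (∫ x, f x * (Real.log (f x) - lbar x.1) * μ x) / Z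
        + (Real.log Zl - Real.log Z) := by
    have e : (fun x => (f x * μ x / Z) *
          Real.log ((f x * μ x / Z) / (Real.exp (lbar x.1) * μ x / Zl)))
        = fun x => (f x * (Real.log (f x) - lbar x.1) * μ x) * Z⁻¹
          + ((Real.log Zl - Real.log Z)/Z) * (f x * μ x) := by
      funext x
      have h3 : Z * ((f x * μ x / Z) *
          Real.log ((f x * μ x / Z) / (Real.exp (lbar x.1) * μ x / Zl)))
          = f x * (Real.log (f x) - lbar x.1) * μ x
            + (Real.log Zl - Real.log Z) * (f x * μ x) := by
        have h4 := hptid x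
        linarith
      have h5 : (f x * μ x / Z) *
          Real.log ((f x * μ x / Z) / (Real.exp (lbar x.1) * μ x / Zl))
          = (Z * ((f x * μ x / Z) *
            Real.log ((f x * μ x / Z) / (Real.exp (lbar x.1) * μ x / Zl))))/Z := by
        field_simp
      rw [h5, h3]
      field_simp
    rw [e, integral_add (hTint.mul_const _) (hfint.const_mul _),
      integral_mul_const, integral_const_mul, ← hZ]
    field_simp
  rw [hIeq]
  have hlog : Real.log Zl - Real.log Z ≤ 0 := sub_nonpos.mpr (Real.log_le_log hZl0 hZlZ)
  have hRHS : (Real.sqrt κ * Real.sqrt (∫ x, (f x)^2 * μ x) / Z) * Real.sqrt R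
      = (Real.sqrt (∫ x, (f x)^2 * μ x) * Real.sqrt (κ * R))/Z := by
    rw [Real.sqrt_mul hκ]
    ring
  calc (∫ x, f x * (Real.log (f x) - lbar x.1) * μ x) / Z + (Real.log Zl - Real.log Z)
      ≤ (∫ x, f x * (Real.log (f x) - lbar x.1) * μ x) / Z := by linarith
    _ ≤ (Real.sqrt (∫ x, (f x)^2 * μ x) * Real.sqrt (κ * R))/Z :=
        (div_le_div_iff_of_pos_right hZ0).mpr hT
    _ = (Real.sqrt κ * Real.sqrt (∫ x, (f x)^2 * μ x) / Z) * Real.sqrt R := hRHS.symm
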